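/- Fix x₀, l ∈ ℝ with x₀ ≠ l, T > 0, c > 0, d ∈ ℕ, and let ρ, ρ* : [0,T] → ℝ^d be continuous with ρ(t)·ρ*(t) ≥ ‖ρ*(t)‖² > 0 for all t. Then (x₀-l)²·[(exp(∫₀ᵀ ρ·ρ* dt)-1)² - (exp(∫₀ᵀ‖ρ*‖²dt)-1)²] / [(exp(∫₀ᵀ‖ρ*‖²dt)-1)(exp(∫₀ᵀρ·ρ* dt)-1)²] + (cd/2)·[T - exp(-2∫₀ᵀ(ρ·ρ*-‖ρ*‖²)dt)·∫₀ᵀ exp(2∫₀ᵗ(ρ·ρ*-‖ρ*‖²)ds)dt] ≥ 0. -/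

import Mathlib

open intervalIntegral

/-- The saddle-point inequality `M(ρ*, π⁰) - M(ρ, π⁰) ≥ 0`. -/
theorem stmt_18 (d : ℕ) (x₀ l T c : ℝ) (hxl : x₀ ≠ l) (hT : 0 < T) (hc : 0 < c)
    (ρ ρs : ℝ → EuclideanSpace ℝ (Fin d))
    (hρ : Continuous ρ) (hρs : Continuous ρs)
    (hdom : ∀ t ∈ Set.Icc 0 T,
      (inner ℝ (ρ t) (ρs t) : ℝ) ≥ ‖ρs t‖ ^ 2 ∧ 0 < ‖ρs t‖ ^ 2) :
    0 ≤
      (x₀ - l) ^ 2 *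
          ((Real.exp (∫ t in (0 : ℝ)..T, (inner ℝ (ρ t) (ρs t) : ℝ)) - 1) ^ 2 -
            (Real.exp (∫ t in (0 : ℝ)..T, ‖ρs t‖ ^ 2) - 1) ^ 2) /
        ((Real.exp (∫ t in (0 : ℝ)..T, ‖ρs t‖ ^ 2) - 1) *
          (Real.exp (∫ t in (0 : ℝ)..T, (inner ℝ (ρ t) (ρs t) : ℝ)) - 1) ^ 2) +
      c * d / 2 *
        (T -
          Real.exp (-2 * ∫ t in (0 : ℝ)..T, ((inner ℝ (ρ t) (ρs t) : ℝ) - ‖ρs t‖ ^ 2)) *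
            ∫ t in (0 : ℝ)..T,
              Real.exp (2 * ∫ s in (0 : ℝ)..t,
                ((inner ℝ (ρ s) (ρs s) : ℝ) - ‖ρs s‖ ^ 2))) := by
  have hcf : Continuous fun t => (inner ℝ (ρ t) (ρs t) : ℝ) := hρ.inner hρs
  have hcn : Continuous fun t => ‖ρs t‖ ^ 2 := (hρs.norm.pow 2)
  have hcg : Continuous fun t => (inner ℝ (ρ t) (ρs t) : ℝ) - ‖ρs t‖ ^ 2 := hcf.sub hcn
  have hIf : ∀ a b : ℝ, IntervalIntegrable (fun t => (inner ℝ (ρ t) (ρs t) : ℝ))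
      MeasureTheory.volume a b := fun a b => hcf.intervalIntegrable a b
  have hIn : ∀ a b : ℝ, IntervalIntegrable (fun t => ‖ρs t‖ ^ 2)
      MeasureTheory.volume a b := fun a b => hcn.intervalIntegrable a b
  have hIg : ∀ a b : ℝ, IntervalIntegrable
      (fun t => (inner ℝ (ρ t) (ρs t) : ℝ) - ‖ρs t‖ ^ 2)
      MeasureTheory.volume a b := fun a b => hcg.intervalIntegrable a b
  set A := ∫ t in (0 : ℝ)..T, (inner ℝ (ρ t) (ρs t) : ℝ) with hA
  set B := ∫ t in (0 : ℝ)..T, ‖ρs t‖ ^ 2 with hB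
  have hBpos : 0 < B :=
    intervalIntegral.intervalIntegral_pos_of_pos_on (hIn 0 T)
      (fun x hx => (hdom x ⟨hx.1.le, hx.2.le⟩).2) hT
  have hBA : B ≤ A :=
    intervalIntegral.integral_mono_on hT.le (hIn 0 T) (hIf 0 T)
      (fun x hx => (hdom x hx).1)
  -- first term nonneg
  have hvpos : 0 < Real.exp B - 1 := by
    have : 1 < Real.exp B := Real.one_lt_exp_iff.mpr hBpos
    linarith
  have hupos : 0 < Real.exp A - 1 := by
    have : 1 < Real.exp A := by
      rw [Real.one_lt_exp_iff]
      exact lt_of_lt_of_le hBpos hBA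
    linarith
  have hvu : Real.exp B - 1 ≤ Real.exp A - 1 := by
    have := Real.exp_le_exp.mpr hBA
    linarith
  have hterm1 : 0 ≤ (x₀ - l) ^ 2 * ((Real.exp A - 1) ^ 2 - (Real.exp B - 1) ^ 2) /
      ((Real.exp B - 1) * (Real.exp A - 1) ^ 2) := by
    apply div_nonneg
    · apply mul_nonneg (sq_nonneg _)
      have : (Real.exp B - 1) ^ 2 ≤ (Real.exp A - 1) ^ 2 :=
        pow_le_pow_left₀ hvpos.le hvu 2
      linarith
    · exact (mul_pos hvpos (pow_pos hupos 2)).le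
  -- second term
  set G : ℝ → ℝ := fun t => ∫ s in (0 : ℝ)..t, ((inner ℝ (ρ s) (ρs s) : ℝ) - ‖ρs s‖ ^ 2)
    with hG
  have hGcont : Continuous G :=
    intervalIntegral.continuous_primitive (fun a b => hIg a b) 0
  have hGmono : ∀ t ∈ Set.Icc (0 : ℝ) T, G t ≤ G T := by
    intro t ht
    have hsplit : G t + (∫ s in t..T, ((inner ℝ (ρ s) (ρs s) : ℝ) - ‖ρs s‖ ^ 2)) = G T :=
      intervalIntegral.integral_add_adjacent_intervals (hIg 0 t) (hIg t T)
    have hnn : 0 ≤ ∫ s in t..T, ((inner ℝ (ρ s) (ρs s) : ℝ) - ‖ρs s‖ ^ 2) := by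
      apply intervalIntegral.integral_nonneg ht.2
      intro u hu
      have hud : u ∈ Set.Icc (0 : ℝ) T := ⟨le_trans ht.1 hu.1, hu.2⟩
      have := (hdom u hud).1
      linarith
    linarith
  have hbound : (∫ t in (0 : ℝ)..T, Real.exp (2 * G t)) ≤ T * Real.exp (2 * G T) := by
    have h1 : (∫ t in (0 : ℝ)..T, Real.exp (2 * G t)) ≤
        ∫ t in (0 : ℝ)..T, Real.exp (2 * G T) := by
      apply intervalIntegral.integral_mono_on hT.le
      · exact ((Real.continuous_exp.comp (continuous_const.mul hGcont)).intervalIntegrable 0 T)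
      · exact intervalIntegrable_const
      · intro x hx
        exact Real.exp_le_exp.mpr (by have := hGmono x hx; linarith)
    have h2 : (∫ t in (0 : ℝ)..T, Real.exp (2 * G T)) = T * Real.exp (2 * G T) := by
      simp [intervalIntegral.integral_const, smul_eq_mul]
    linarith
  have hterm2 : 0 ≤ c * d / 2 * (T - Real.exp (-2 * G T) * ∫ t in (0 : ℝ)..T,
      Real.exp (2 * G t)) := by
    apply mul_nonneg (by positivity)
    have hkey : Real.exp (-2 * G T) * (∫ t in (0 : ℝ)..T, Real.exp (2 * G t)) ≤ T := by
      calc Real.exp (-2 * G T) * (∫ t in (0 : ℝ)..T, Real.exp (2 * G t))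
          ≤ Real.exp (-2 * G T) * (T * Real.exp (2 * G T)) := by
            exact mul_le_mul_of_nonneg_left hbound (Real.exp_nonneg _)
        _ = T := by
            rw [mul_comm T, ← mul_assoc, ← Real.exp_add]
            ring_nf
            simp [Real.exp_zero]
    linarith
  exact add_nonneg hterm1 hterm2
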